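/- Let a ≠ 0, let s be an integer, and let x, y ∈ F with Δ := x² − (d/4)y² ≠ 0; put τ := [[x + by/2, cy], [−ay, x − by/2]] (an element of T(F), with det τ = Δ) and g := τ·diag(ϖ^s, 1). Then: (i) if x − by/2 ∈ ϖ^{−l}·o^× for some integer l ≥ 0 and a·ϖ^{s+l}·y ∈ o, then g = [[Δ·ϖ^s/(x − by/2), ϖ^{−l}·c·y/(x − by/2)], [0, ϖ^{−l}]] · [[1, 0], [−a·ϖ^{s+l}·y, ϖ^{l}·(x − by/2)]], and the second factor lies in GL₂(o); (ii) if x − by/2 ∈ ϖ^{−l}·o^× for some integer l ≥ 0 and a·ϖ^{s+l}·y ∉ o, then g = [[Δ/(a·y), −ϖ^s·(x + by/2)], [0, a·ϖ^s·y]] · [[0, 1], [−1, (x − by/2)/(a·ϖ^s·y)]], and the second factor lies in GL₂(o); (iii) if x − by/2 ∈ p, y ≠ 0, and (x − by/2)/(ϖ^s·a·y) ∈ o, then g = [[Δ/(a·y), −ϖ^s·(x + by/2)], [0, ϖ^s·a·y]] · [[0, 1], [−1, (x − by/2)/(ϖ^s·a·y)]], and the second factor lies in GL₂(o); (iv) if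 x − by/2 ∈ p and (x − by/2)/(ϖ^s·a·y) ∉ o, then g = [[Δ·ϖ^s/(x − by/2), c·y], [0, x − by/2]] · [[1, 0], [−a·ϖ^s·y/(x − by/2), 1]], and the second factor lies in GL₂(o). In each case the first factor is an invertible upper-triangular matrix. -/

import Mathlib

open Matrix

noncomputable section

abbrev Zm0 : Type := WithZero (Multiplicative ℤ)

/-- `ev n` is the value (in `ℤₘ₀ = WithZero (Multiplicative ℤ)`) of an element of additive
valuation `n`; thus `x ∈ 𝔭^n` iff `v x ≤ ev n`, `x ∈ 𝔬` iff `v x ≤ ev 0`, `x ∈ 𝔬^×` iff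
`v x = ev 0`, `x ∈ ϖ^{-l}·𝔬^×` iff `v x = ev (-l)`, and `x ∈ 𝔭` iff `v x ≤ ev 1`. -/
def ev (n : ℤ) : Zm0 := ((Multiplicative.ofAdd (-n) : Multiplicative ℤ) : Zm0)

lemma ev_zero' : ev 0 = 1 := rfl
lemma ev_ne_zero (n : ℤ) : ev n ≠ 0 := WithZero.coe_ne_zero
lemma ev_mul (m n : ℤ) : ev m * ev n = ev (m + n) := by
  rw [ev, ev, ev, ← WithZero.coe_mul, ← ofAdd_add, neg_add]
lemma ev_le_ev {m n : ℤ} : ev m ≤ ev n ↔ n ≤ m := by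
  rw [ev, ev, WithZero.coe_le_coe, Multiplicative.ofAdd_le]; omega

variable {F : Type*} [Field F]

lemma v_zpow (v : Valuation F Zm0) {ϖ : F} (hϖ : v ϖ = ev 1) (n : ℤ) :
    v (ϖ ^ n) = ev n := by
  rw [map_zpow₀, hϖ, ev, ev, ← WithZero.coe_zpow, ← ofAdd_zsmul, smul_neg, smul_eq_mul, mul_one]

/-- GL₂(𝔬) : integral entries and unit determinant -/
def GL2O (v : Valuation F Zm0) : Set (Matrix (Fin 2) (Fin 2) F) :=
  {g | (∀ i j, v (g i j) ≤ ev 0) ∧ v g.det = ev 0}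

/-- B(F): invertible upper triangular matrices -/
def BF (F : Type*) [Field F] : Set (Matrix (Fin 2) (Fin 2) F) :=
  {g | g 1 0 = 0 ∧ g.det ≠ 0}

lemma mem_GL2O (v : Valuation F Zm0) {A B C D : F}
    (h00 : v A ≤ ev 0) (h01 : v B ≤ ev 0) (h10 : v C ≤ ev 0) (h11 : v D ≤ ev 0)
    (hdet : v (A * D - B * C) = ev 0) : !![A, B; C, D] ∈ GL2O v := by
  constructor
  · intro i j
    fin_cases i <;> fin_cases j
    · simpa using h00
    · simpa using h01
    · simpa using h10
    · simpa using h11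
  · rw [Matrix.det_fin_two_of]; exact hdet

lemma mem_BF {A B D : F} (h : A * D ≠ 0) : !![A, B; 0, D] ∈ BF F := by
  refine ⟨by simp, ?_⟩
  rw [Matrix.det_fin_two_of]
  simpa using h

set_option maxHeartbeats 2000000 in
/-- decomposition of g = τ·diag(ϖ^s, 1) as (invertible upper triangular)·(element
of GL₂(𝔬)), in each of the four cases, where τ = [[x + by/2, cy],[−ay, x − by/2]] and
Δ = det τ = x² − (d/4)y², d = b² − 4ac. -/
theorem stmt2 [CharZero F]
    (v : Valuation F Zm0) (ϖ : F) (hϖ : v ϖ = ev 1)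
    (a b c : F)
    (hao : v a ≤ ev 0) (hbo : v b ≤ ev 0) (hc : v c = ev 0)
    (hd0 : b ^ 2 - 4 * (a * c) ≠ 0)
    (ha0 : a ≠ 0)
    (s : ℤ) (x y : F)
    (Δ : F) (hΔdef : Δ = x ^ 2 - ((b ^ 2 - 4 * (a * c)) / 4) * y ^ 2) (hΔ : Δ ≠ 0)
    (g : Matrix (Fin 2) (Fin 2) F)
    (hg : g = !![x + b * y / 2, c * y; -(a * y), x - b * y / 2] * !![ϖ ^ s, 0; 0, 1]) :
    -- case (i)
    ((∀ l : ℕ, v (x - b * y / 2) = ev (-(l : ℤ)) → v (a * ϖ ^ (s + (l : ℤ)) * y) ≤ ev 0 →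
      g = !![Δ * ϖ ^ s / (x - b * y / 2), ϖ ^ (-(l : ℤ)) * c * y / (x - b * y / 2);
             0, ϖ ^ (-(l : ℤ))]
          * !![1, 0; -(a * ϖ ^ (s + (l : ℤ)) * y), ϖ ^ (l : ℤ) * (x - b * y / 2)]
        ∧ !![1, 0; -(a * ϖ ^ (s + (l : ℤ)) * y), ϖ ^ (l : ℤ) * (x - b * y / 2)] ∈ GL2O v
        ∧ !![Δ * ϖ ^ s / (x - b * y / 2), ϖ ^ (-(l : ℤ)) * c * y / (x - b * y / 2);
             0, ϖ ^ (-(l : ℤ))] ∈ BF F))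
    -- case (ii)
    ∧ (∀ l : ℕ, v (x - b * y / 2) = ev (-(l : ℤ)) → ¬ v (a * ϖ ^ (s + (l : ℤ)) * y) ≤ ev 0 →
      g = !![Δ / (a * y), -(ϖ ^ s * (x + b * y / 2)); 0, a * ϖ ^ s * y]
          * !![0, 1; -1, (x - b * y / 2) / (a * ϖ ^ s * y)]
        ∧ !![0, 1; -1, (x - b * y / 2) / (a * ϖ ^ s * y)] ∈ GL2O v
        ∧ !![Δ / (a * y), -(ϖ ^ s * (x + b * y / 2)); 0, a * ϖ ^ s * y] ∈ BF F)
    -- case (iii)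
    ∧ (v (x - b * y / 2) ≤ ev 1 → y ≠ 0 → v ((x - b * y / 2) / (ϖ ^ s * a * y)) ≤ ev 0 →
      g = !![Δ / (a * y), -(ϖ ^ s * (x + b * y / 2)); 0, ϖ ^ s * a * y]
          * !![0, 1; -1, (x - b * y / 2) / (ϖ ^ s * a * y)]
        ∧ !![0, 1; -1, (x - b * y / 2) / (ϖ ^ s * a * y)] ∈ GL2O v
        ∧ !![Δ / (a * y), -(ϖ ^ s * (x + b * y / 2)); 0, ϖ ^ s * a * y] ∈ BF F)
    -- case (iv)
    ∧ (v (x - b * y / 2) ≤ ev 1 → ¬ v ((x - b * y / 2) / (ϖ ^ s * a * y)) ≤ ev 0 →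
      g = !![Δ * ϖ ^ s / (x - b * y / 2), c * y; 0, x - b * y / 2]
          * !![1, 0; -(a * ϖ ^ s * y / (x - b * y / 2)), 1]
        ∧ !![1, 0; -(a * ϖ ^ s * y / (x - b * y / 2)), 1] ∈ GL2O v
        ∧ !![Δ * ϖ ^ s / (x - b * y / 2), c * y; 0, x - b * y / 2] ∈ BF F) := by
  have hϖ0 : ϖ ≠ 0 := by
    intro h; rw [h, _root_.map_zero] at hϖ; exact ev_ne_zero 1 hϖ.symm
  have hΔ' : Δ = (x + b * y / 2) * (x - b * y / 2) + a * c * y ^ 2 := by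
    rw [hΔdef]; ring
  have hPs : (ϖ : F) ^ s ≠ 0 := zpow_ne_zero _ hϖ0
  have hone : v (1 : F) ≤ ev 0 := le_of_eq (by rw [_root_.map_one, ev_zero'])
  have hzero : v (0 : F) ≤ ev 0 := by rw [_root_.map_zero]; exact zero_le'
  refine ⟨?_, ?_, ?_, ?_⟩
  · -- case (i)
    intro l h1 h2
    have hu0 : x - b * y / 2 ≠ 0 := by
      intro h; rw [h, _root_.map_zero] at h1; exact ev_ne_zero _ h1.symm
    have hu2 : x * 2 - b * y ≠ 0 := fun h => hu0 (by linear_combination h / 2)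
    have hu4 : x * 2 - y * b ≠ 0 := by rwa [mul_comm y b]
    have hD : v (ϖ ^ (l:ℤ) * (x - b * y / 2)) = ev 0 := by
      rw [_root_.map_mul, v_zpow v hϖ, h1, ev_mul, add_neg_cancel]
    refine ⟨?_, mem_GL2O v hone hzero (by rw [Valuation.map_neg]; exact h2) hD.le ?_, ?_⟩
    · rw [hg]
      have e1 : ϖ ^ (s + (l:ℤ)) = ϖ ^ s * ϖ ^ (l:ℤ) := zpow_add₀ hϖ0 _ _
      have e2 : ϖ ^ (-(l:ℤ)) = (ϖ ^ (l:ℤ))⁻¹ := zpow_neg ϖ _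
      have hQ : ϖ ^ (l:ℤ) ≠ 0 := zpow_ne_zero _ hϖ0
      rw [e1, e2]
      generalize ϖ ^ (l:ℤ) = Q at hQ ⊢
      generalize ϖ ^ s = P
      ext i j
      fin_cases i <;> fin_cases j <;>
        simp [Matrix.mul_apply, Fin.sum_univ_two, hΔ'] <;>
          field_simp [hu2, hu4] <;> ring
    · rw [show (1 : F) * (ϖ ^ (l:ℤ) * (x - b * y / 2)) - 0 * -(a * ϖ ^ (s + (l:ℤ)) * y)
          = ϖ ^ (l:ℤ) * (x - b * y / 2) by ring]
      exact hD
    · exact mem_BF (mul_ne_zero (div_ne_zero (mul_ne_zero hΔ hPs) hu0) (zpow_ne_zero _ hϖ0))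
  · -- case (ii)
    intro l h1 h2
    have hy0 : y ≠ 0 := by
      intro h; rw [h, mul_zero, _root_.map_zero] at h2; exact h2 zero_le'
    have hu0 : x - b * y / 2 ≠ 0 := by
      intro h; rw [h, _root_.map_zero] at h1; exact ev_ne_zero _ h1.symm
    have hu2 : x * 2 - b * y ≠ 0 := fun h => hu0 (by linear_combination h / 2)
    have hV0 : v (a * ϖ ^ s * y) ≠ 0 :=
      (Valuation.ne_zero_iff v).mpr (mul_ne_zero (mul_ne_zero ha0 hPs) hy0)
    have hVlt : v (x - b * y / 2) ≤ v (a * ϖ ^ s * y) := by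
      have e1 : a * ϖ ^ (s + (l:ℤ)) * y = a * ϖ ^ s * y * ϖ ^ (l:ℤ) := by
        rw [zpow_add₀ hϖ0]; ring
      rw [e1, _root_.map_mul, v_zpow v hϖ] at h2
      have h2' := lt_of_not_ge h2
      rw [h1]
      by_contra hcon
      push_neg at hcon
      have := mul_le_mul_left hcon.le (ev (l:ℤ))
      rw [ev_mul, neg_add_cancel, ev_zero'] at this
      exact absurd (this.trans_lt h2') (lt_irrefl _)
    have hBdiv : v ((x - b * y / 2) / (a * ϖ ^ s * y)) ≤ ev 0 := by
      rw [map_div₀, ev_zero']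
      exact (div_le_one₀ (zero_lt_iff.mpr hV0)).mpr hVlt
    refine ⟨?_, mem_GL2O v hzero hone (by rw [Valuation.map_neg]; exact hone) hBdiv ?_, ?_⟩
    · rw [hg]
      generalize ϖ ^ s = P at hPs ⊢
      ext i j
      fin_cases i <;> fin_cases j <;>
        simp [Matrix.mul_apply, Fin.sum_univ_two, hΔ'] <;>
        (try field_simp [hu2, ha0, hy0, hPs]) <;> (try ring) <;> field_simp [hu2, ha0, hy0, hPs] <;> ring
    · rw [show (0 : F) * ((x - b * y / 2) / (a * ϖ ^ s * y)) - 1 * -1 = 1 by ring,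
        _root_.map_one, ev_zero']
    · exact mem_BF (mul_ne_zero (div_ne_zero hΔ (mul_ne_zero ha0 hy0))
        (mul_ne_zero (mul_ne_zero ha0 hPs) hy0))
  · -- case (iii)
    intro h1 hy0 h3
    refine ⟨?_, mem_GL2O v hzero hone (by rw [Valuation.map_neg]; exact hone) h3 ?_, ?_⟩
    · rw [hg]
      generalize ϖ ^ s = P at hPs ⊢
      ext i j
      fin_cases i <;> fin_cases j <;>
        simp [Matrix.mul_apply, Fin.sum_univ_two, hΔ'] <;>
        (try field_simp [ha0, hy0, hPs]) <;> (try ring) <;> field_simp [ha0, hy0, hPs] <;> ring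
    · rw [show (0 : F) * ((x - b * y / 2) / (ϖ ^ s * a * y)) - 1 * -1 = 1 by ring,
        _root_.map_one, ev_zero']
    · exact mem_BF (mul_ne_zero (div_ne_zero hΔ (mul_ne_zero ha0 hy0))
        (mul_ne_zero (mul_ne_zero hPs ha0) hy0))
  · -- case (iv)
    intro h1 h4
    have hW0 : v (ϖ ^ s * a * y) ≠ 0 := by
      intro h
      rw [map_div₀, h, div_zero] at h4
      exact h4 zero_le'
    have hy0 : y ≠ 0 := by
      intro h; apply hW0; rw [h, mul_zero, _root_.map_zero]
    have hu0 : x - b * y / 2 ≠ 0 := by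
      intro h; rw [h, zero_div, _root_.map_zero] at h4; exact h4 zero_le'
    have hu2 : x * 2 - b * y ≠ 0 := fun h => hu0 (by linear_combination h / 2)
    have hu4 : x * 2 - y * b ≠ 0 := by rwa [mul_comm y b]
    have hWlt : v (ϖ ^ s * a * y) < v (x - b * y / 2) := by
      have h4' := lt_of_not_ge h4
      rw [map_div₀, ev_zero', lt_div_iff₀ (zero_lt_iff.mpr hW0), one_mul] at h4'
      exact h4'
    have hC : v (a * ϖ ^ s * y / (x - b * y / 2)) ≤ ev 0 := by
      rw [map_div₀, ev_zero']
      refine (div_le_one₀ (zero_lt_iff.mpr ((Valuation.ne_zero_iff v).mpr hu0))).mpr ?_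
      rw [show a * ϖ ^ s * y = ϖ ^ s * a * y by ring]
      exact hWlt.le
    refine ⟨?_, mem_GL2O v hone hzero (by rw [Valuation.map_neg]; exact hC) hone ?_, ?_⟩
    · rw [hg]
      generalize ϖ ^ s = P at hPs ⊢
      ext i j
      fin_cases i <;> fin_cases j <;>
        simp [Matrix.mul_apply, Fin.sum_univ_two, hΔ'] <;>
        (try field_simp [hu2, hPs, hu4]) <;> ring
    · rw [show (1 : F) * 1 - 0 * -(a * ϖ ^ s * y / (x - b * y / 2)) = 1 by ring,
        _root_.map_one, ev_zero']
    · exact mem_BF (mul_ne_zero (div_ne_zero (mul_ne_zero hΔ hPs) hu0) hu0)
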